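/- Let a_ij ∈ {0,1} for i,j ∈ {1,…,N} with a_ij = a_ji and a_ii = 0, and set b_ij = −2a_ij and b_l = Σ_{j=1}^{N} a_lj. Let real numbers c_l satisfy c_l ≥ b_l and c_l − b_l < 1/N for all l. Then every maximizer over y ∈ {0,1}^N of the perturbed objective Σ_{i<j} b_ij y_i y_j + Σ_l c_l y_l is also a maximizer of the original zero-one UQP objective Σ_{i<j} b_ij y_i y_j + Σ_l b_l y_l (and hence its indicator set {i : y_i = 1} realizes a maximum cut of the graph with adjacency entries a_ij). -/

import Mathlib

/-- `y` is a binary vector, i.e. `y ∈ {0,1}^N` viewed inside `ℝ^N`. -/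
def IsBin {N : ℕ} (y : Fin N → ℝ) : Prop := ∀ i, y i = 0 ∨ y i = 1

lemma isInt_of_bin {N : ℕ} (a : Fin N → Fin N → ℝ)
    (hbin : ∀ i j, a i j = 0 ∨ a i j = 1)
    (z : Fin N → ℝ) (hz : IsBin z) :
    (∑ i : Fin N, ∑ j ∈ Finset.Ioi i, (-2 * a i j) * (z i * z j))
      + ∑ l, (∑ j : Fin N, a l j) * z l ∈ (Int.castRingHom ℝ).range := by
  have ha : ∀ i j, a i j ∈ (Int.castRingHom ℝ).range := by
    intro i j
    rcases hbin i j with h | h <;> rw [h]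
    · exact Subring.zero_mem _
    · exact Subring.one_mem _
  have hzm : ∀ i, z i ∈ (Int.castRingHom ℝ).range := by
    intro i
    rcases hz i with h | h <;> rw [h]
    · exact Subring.zero_mem _
    · exact Subring.one_mem _
  apply Subring.add_mem
  · apply Subring.sum_mem
    intro i _
    apply Subring.sum_mem
    intro j _
    exact Subring.mul_mem _ (Subring.mul_mem _ (Subring.neg_mem _
      ⟨2, by norm_num⟩) (ha i j))
      (Subring.mul_mem _ (hzm i) (hzm j))
  · apply Subring.sum_mem
    intro l _
    exact Subring.mul_mem _ (Subring.sum_mem _ (fun j _ => ha l j)) (hzm l)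

/-- Let `a i j ∈ {0,1}` be symmetric with zero diagonal, `b_ij = −2 a_ij`,
`b_l = Σ_j a_lj` (the degree of `l`), and let the reals `c_l` satisfy
`c_l ≥ b_l` and `c_l − b_l < 1/N` for all `l`. Then every maximizer over
`y ∈ {0,1}^N` of the perturbed objective `Σ_{i<j} b_ij y_i y_j + Σ_l c_l y_l`
is also a maximizer of the original zero-one UQP objective
`Σ_{i<j} b_ij y_i y_j + Σ_l b_l y_l`. -/
theorem statement8 (N : ℕ) (a : Fin N → Fin N → ℝ)
    (hbin : ∀ i j, a i j = 0 ∨ a i j = 1) (hsymm : ∀ i j, a i j = a j i)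
    (hdiag : ∀ i, a i i = 0)
    (c : Fin N → ℝ)
    (hc : ∀ l, (∑ j : Fin N, a l j) ≤ c l ∧ c l - (∑ j : Fin N, a l j) < 1 / (N : ℝ))
    (y : Fin N → ℝ) (hy : IsBin y)
    (hmax : ∀ z, IsBin z →
      (∑ i : Fin N, ∑ j ∈ Finset.Ioi i, (-2 * a i j) * (z i * z j)) + ∑ l, c l * z l
        ≤ (∑ i : Fin N, ∑ j ∈ Finset.Ioi i, (-2 * a i j) * (y i * y j)) + ∑ l, c l * y l) :
    ∀ z, IsBin z →
      (∑ i : Fin N, ∑ j ∈ Finset.Ioi i, (-2 * a i j) * (z i * z j))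
          + ∑ l, (∑ j : Fin N, a l j) * z l
        ≤ (∑ i : Fin N, ∑ j ∈ Finset.Ioi i, (-2 * a i j) * (y i * y j))
          + ∑ l, (∑ j : Fin N, a l j) * y l := by
  intro z hz
  rcases Nat.eq_zero_or_pos N with hN | hN
  · subst hN; simp
  -- f z ≤ g z
  have h1 : (∑ i : Fin N, ∑ j ∈ Finset.Ioi i, (-2 * a i j) * (z i * z j))
      + ∑ l, (∑ j : Fin N, a l j) * z l
      ≤ (∑ i : Fin N, ∑ j ∈ Finset.Ioi i, (-2 * a i j) * (z i * z j)) + ∑ l, c l * z l := by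
    apply add_le_add_right
    apply Finset.sum_le_sum
    intro l _
    have hzl : (0:ℝ) ≤ z l := by rcases hz l with h | h <;> rw [h] <;> norm_num
    exact mul_le_mul_of_nonneg_right (hc l).1 hzl
  have h2 := hmax z hz
  -- g y < f y + 1
  have h3 : (∑ i : Fin N, ∑ j ∈ Finset.Ioi i, (-2 * a i j) * (y i * y j)) + ∑ l, c l * y l
      < ((∑ i : Fin N, ∑ j ∈ Finset.Ioi i, (-2 * a i j) * (y i * y j))
          + ∑ l, (∑ j : Fin N, a l j) * y l) + 1 := by
    have hsum : ∑ l, c l * y l < (∑ l, (∑ j : Fin N, a l j) * y l) + 1 := by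
      have : ∑ l : Fin N, (c l * y l - (∑ j : Fin N, a l j) * y l) < ∑ l : Fin N, 1 / (N : ℝ) := by
        apply Finset.sum_lt_sum_of_nonempty
        · exact Finset.univ_nonempty_iff.mpr ⟨⟨0, hN⟩⟩
        · intro l _
          have hd : 0 ≤ c l - (∑ j : Fin N, a l j) := sub_nonneg.mpr (hc l).1
          have : c l * y l - (∑ j : Fin N, a l j) * y l = (c l - (∑ j : Fin N, a l j)) * y l := by
            ring
          rw [this]
          rcases hy l with h | h <;> rw [h]
          · simpa using lt_of_le_of_lt hd (hc l).2
          · simpa using (hc l).2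
      rw [Finset.sum_sub_distrib, Finset.sum_const, Finset.card_univ, Fintype.card_fin,
        nsmul_eq_mul] at this
      have hN' : (N : ℝ) ≠ 0 := Nat.cast_ne_zero.mpr hN.ne'
      rw [mul_one_div, div_self hN'] at this
      linarith
    linarith
  have hfz := isInt_of_bin a hbin z hz
  have hfy := isInt_of_bin a hbin y hy
  obtain ⟨m, hm⟩ := hfz
  obtain ⟨n, hn⟩ := hfy
  have hlt : (m : ℝ) < (n : ℝ) + 1 := by
    have hm' : (m : ℝ) = _ := hm
    have hn' : (n : ℝ) = _ := hn
    rw [hm', hn']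
    linarith
  have hmn : m ≤ n := by
    have : m < n + 1 := by exact_mod_cast hlt
    omega
  rw [← hm, ← hn]
  exact Int.cast_le.mpr hmn
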